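/- Let A be an associative algebra, Ω^nA ≅ A₊ ⊗ A^{⊗n} the module of abstract n-forms, and suppose φ : A^{⊗n} → Ω^{n+1}A is a Hochschild n-cochain with δφ = d^{⊗(n+1)}, the universal (n+1)-cocycle (a₁,…,a_{n+1}) ↦ da₁⋯da_{n+1}. Define α : Ω^kA → Ω^{k+1}A by α(a₀ da₁⋯da_k) = a₀ φ(a₁,…,a_n) da_{n+1}⋯da_k. Then bα + αb = 1 on Ω^kA ≅ C_k(A) for all k ≥ n+1, i.e. α is a contracting homotopy of the Hochschild chain complex in degrees ≥ n+1. -/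

import Mathlib

open scoped TensorProduct
open Finset

section

variable (k A : Type*) [CommRing k] [Ring A] [Algebra k A]

/-- The module of abstract `n`-forms `Ω^n A ≅ A₊ ⊗ A^{⊗n} = C_n(A)`. -/
abbrev CycChain (n : ℕ) : Type _ :=
  Unitization k A ⊗[k] (PiTensorProduct k (fun _ : Fin n => A))

/-- The elementary form `a₀ d(f 0) ⋯ d(f (n-1))` in `Ω^n A`. -/
noncomputable def elemC (n : ℕ) (a₀ : Unitization k A) (f : ℕ → A) : CycChain k A n :=
  a₀ ⊗ₜ[k] PiTensorProduct.tprod k (fun i : Fin n => f (i : ℕ))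

/-- The value of the Hochschild boundary `b` on the elementary chain
`a₀ ⊗ f 0 ⊗ ⋯ ⊗ f n` of degree `n+1`. -/
noncomputable def bElemF (n : ℕ) (a₀ : Unitization k A) (f : ℕ → A) : CycChain k A n :=
  elemC k A n (a₀ * Unitization.inr (f 0)) (fun i => f (i + 1))
  + ∑ j ∈ Finset.range n, ((-1 : ℤ) ^ (j + 1)) •
      elemC k A n a₀
        (fun i => if i < j then f i else if i = j then f j * f (j + 1) else f (i + 1))
  + ((-1 : ℤ) ^ (n + 1)) • elemC k A n (Unitization.inr (f n) * a₀) f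

/-- Degree cast of chain groups. -/
noncomputable def castDeg {m m' : ℕ} (h : m = m') : CycChain k A m ≃ₗ[k] CycChain k A m' :=
  TensorProduct.congr (LinearEquiv.refl k (Unitization k A))
    (PiTensorProduct.reindex k (fun _ : Fin m => A) (finCongr h))

/-- The left action of `A₊` on forms: `a₀ · (c₀ da₁ ⋯ da_n) = (a₀ c₀) da₁ ⋯ da_n`. -/
noncomputable def leftA (m : ℕ) (a₀ : Unitization k A) :
    CycChain k A m →ₗ[k] CycChain k A m :=
  TensorProduct.map (LinearMap.mulLeft k a₀) LinearMap.id

/-- The value of the right action of `b ∈ A` on the elementary form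
`a₀ d(f 0) ⋯ d(f m)` of degree `m+1`, via the Leibniz rule `(dx)y = d(xy) − x(dy)`:
`ω·b = a₀ df₀ ⋯ df_{m−1} d(f_m b) + Σ_j (−1)^{m−j} a₀ df₀ ⋯ d(f_j f_{j+1}) ⋯ df_m db
  + (−1)^{m+1} (a₀ f₀) df₁ ⋯ df_m db`. -/
noncomputable def rElemF (m : ℕ) (a₀ : Unitization k A) (f : ℕ → A) (b : A) :
    CycChain k A (m + 1) :=
  elemC k A (m + 1) a₀ (fun i => if i = m then f m * b else f i)
  + ∑ j ∈ Finset.range m, ((-1 : ℤ) ^ (m - j)) •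
      elemC k A (m + 1) a₀
        (fun i => if i < j then f i else if i = j then f j * f (j + 1)
          else if i = m then b else f (i + 1))
  + ((-1 : ℤ) ^ (m + 1)) •
      elemC k A (m + 1) (a₀ * Unitization.inr (f 0))
        (fun i => if i = m then b else f (i + 1))

end


section AuxLemmas

variable {k A : Type*} [CommRing k] [Ring A] [Algebra k A]

lemma castDeg_elemC {m m' : ℕ} (h : m = m') (a₀ : Unitization k A) (f : ℕ → A) :
    castDeg k A h (elemC k A m a₀ f) = elemC k A m' a₀ f := by
  unfold castDeg elemC
  rw [TensorProduct.congr_tmul, PiTensorProduct.reindex_tprod]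
  rfl

lemma leftA_elemC (m : ℕ) (c a₀ : Unitization k A) (f : ℕ → A) :
    leftA k A m c (elemC k A m a₀ f) = elemC k A m (c * a₀) f := by
  unfold leftA elemC
  rw [TensorProduct.map_tmul]
  rfl

lemma elemC_congr {m : ℕ} (a₀ : Unitization k A) {f f' : ℕ → A}
    (h : ∀ i, i < m → f i = f' i) :
    elemC k A m a₀ f = elemC k A m a₀ f' := by
  unfold elemC
  exact congrArg _ (congrArg _ (funext fun i => h i i.isLt))

/-- extension of a `Fin m`-tuple to `ℕ`. -/
def extF {m : ℕ} (v : Fin m → A) : ℕ → A := fun i => if hi : i < m then v ⟨i, hi⟩ else 0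

lemma tmul_tprod_eq_elemC {m : ℕ} (u : Unitization k A) (v : Fin m → A) :
    u ⊗ₜ[k] PiTensorProduct.tprod k v = elemC k A m u (extF v) := by
  unfold elemC
  exact congrArg _ (congrArg _ (funext fun i => by simp [extF]))

lemma linearMap_ext_elemC {m : ℕ} {N : Type*} [AddCommMonoid N] [Module k N]
    {F G : CycChain k A m →ₗ[k] N}
    (h : ∀ (u : Unitization k A) (f : ℕ → A),
      F (elemC k A m u f) = G (elemC k A m u f)) : F = G := by
  refine TensorProduct.ext (LinearMap.ext fun u => PiTensorProduct.ext (MultilinearMap.ext fun v => ?_))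
  simp only [LinearMap.compMultilinearMap_apply, LinearMap.compr₂ₛₗ_apply, TensorProduct.mk_apply]
  rw [tmul_tprod_eq_elemC]
  exact h u (extF v)

lemma sum_range_split {M : Type*} [AddCommMonoid M] (n s : ℕ) (F : ℕ → M) :
    ∑ i ∈ Finset.range (n + s), F i
      = (∑ i ∈ Finset.range n, F i) + ∑ t ∈ Finset.range s, F (n + t) := by
  induction s with
  | zero => simp
  | succ s ih =>
      rw [show n + (s + 1) = (n + s) + 1 by omega, Finset.sum_range_succ, ih,
        Finset.sum_range_succ, add_assoc]

lemma sum_range_split₂ {M : Type*} [AddCommMonoid M] (n s : ℕ) (F : ℕ → M) :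
    ∑ i ∈ Finset.range (n + s + 1), F i
      = ((∑ i ∈ Finset.range n, F i) + F n) + ∑ t ∈ Finset.range s, F (n + 1 + t) := by
  induction s with
  | zero => simp [Finset.sum_range_succ]
  | succ s ih =>
      rw [show n + (s + 1) + 1 = (n + s + 1) + 1 by omega, Finset.sum_range_succ, ih,
        Finset.sum_range_succ, show n + s + 1 = n + 1 + s by omega]
      abel

/-- The composite map `ω ↦ cast (a₀ · (ω dg₁ ⋯ dg_s))`. -/
noncomputable def Lm (k A : Type*) [CommRing k] [Ring A] [Algebra k A] (n : ℕ)
    (app : ∀ m r : ℕ, (ℕ → A) → (CycChain k A m →ₗ[k] CycChain k A (m + r)))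
    (s : ℕ) (a₀ : Unitization k A) (g : ℕ → A) :
    CycChain k A (n + 1) →ₗ[k] CycChain k A (n + s + 1) :=
  (castDeg k A (Nat.add_right_comm n 1 s : (n + 1) + s = n + s + 1)).toLinearMap.comp
    ((leftA k A ((n + 1) + s) a₀).comp (app (n + 1) s g))

lemma Lm_elemC (n : ℕ)
    (app : ∀ m r : ℕ, (ℕ → A) → (CycChain k A m →ₗ[k] CycChain k A (m + r)))
    (happ : ∀ (m r : ℕ) (g : ℕ → A) (a₀ : Unitization k A) (f : ℕ → A),
      app m r g (elemC k A m a₀ f)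
        = elemC k A (m + r) a₀ (fun i => if i < m then f i else g (i - m)))
    (s : ℕ) (a₀ : Unitization k A) (g : ℕ → A) (u : Unitization k A) (h : ℕ → A) :
    Lm k A n app s a₀ g (elemC k A (n + 1) u h)
      = elemC k A (n + s + 1) (a₀ * u) (fun i => if i < n + 1 then h i else g (i - (n + 1))) := by
  simp only [Lm, LinearMap.comp_apply, LinearEquiv.coe_coe]
  rw [happ, leftA_elemC, castDeg_elemC]

lemma Lm_leftA (n : ℕ)
    (app : ∀ m r : ℕ, (ℕ → A) → (CycChain k A m →ₗ[k] CycChain k A (m + r)))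
    (happ : ∀ (m r : ℕ) (g : ℕ → A) (a₀ : Unitization k A) (f : ℕ → A),
      app m r g (elemC k A m a₀ f)
        = elemC k A (m + r) a₀ (fun i => if i < m then f i else g (i - m)))
    (s : ℕ) (a₀ c : Unitization k A) (g : ℕ → A) :
    Lm k A n app s (a₀ * c) g = (Lm k A n app s a₀ g).comp (leftA k A (n + 1) c) := by
  apply linearMap_ext_elemC
  intro u h
  rw [LinearMap.comp_apply, leftA_elemC, Lm_elemC n app happ, Lm_elemC n app happ, mul_assoc]

set_option maxHeartbeats 4000000 in
lemma lemE (n : ℕ)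
    (bop : ∀ m : ℕ, CycChain k A (m + 1) →ₗ[k] CycChain k A m)
    (hbop : ∀ (m : ℕ) (a₀ : Unitization k A) (f : ℕ → A),
      bop m (elemC k A (m + 1) a₀ f) = bElemF k A m a₀ f)
    (rA : A → CycChain k A (n + 1) →ₗ[k] CycChain k A (n + 1))
    (hrA : ∀ (b : A) (a₀ : Unitization k A) (f : ℕ → A),
      rA b (elemC k A (n + 1) a₀ f) = rElemF k A n a₀ f b)
    (app : ∀ m r : ℕ, (ℕ → A) → (CycChain k A m →ₗ[k] CycChain k A (m + r)))
    (happ : ∀ (m r : ℕ) (g : ℕ → A) (a₀ : Unitization k A) (f : ℕ → A),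
      app m r g (elemC k A m a₀ f)
        = elemC k A (m + r) a₀ (fun i => if i < m then f i else g (i - m)))
    (s : ℕ) (a₀ : Unitization k A) (f : ℕ → A) :
    (bop (n + s + 1)).comp
        ((castDeg k A (by omega : n + 1 + (s + 1) = n + s + 1 + 1)).toLinearMap.comp
          ((leftA k A (n + 1 + (s + 1)) a₀).comp (app (n + 1) (s + 1) (fun i => f (n + i)))))
      + (∑ t ∈ Finset.range s, ((-1 : ℤ) ^ (n + t + 1)) •
          Lm k A n app s a₀
            (fun i => if i < t then f (n + i) else if i = t then f (n + t) * f (n + t + 1)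
              else f (n + i + 1)))
      + ((-1 : ℤ) ^ (n + s + 1)) •
          Lm k A n app s (Unitization.inr (f (n + s)) * a₀) (fun i => f (n + i))
    = ((-1 : ℤ) ^ (n + 1)) • (Lm k A n app s a₀ (fun i => f (n + 1 + i))).comp (rA (f n)) := by
  apply linearMap_ext_elemC
  intro u h
  simp only [LinearMap.add_apply, LinearMap.comp_apply, LinearMap.sum_apply,
    LinearMap.smul_apply, LinearEquiv.coe_coe]
  rw [happ, leftA_elemC, castDeg_elemC, hbop, hrA]
  unfold bElemF rElemF
  simp only [map_add, map_zsmul, map_sum, Lm_elemC n app happ]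
  simp only [smul_add, Finset.smul_sum, smul_smul]
  rw [sum_range_split₂ n s]
  -- (1) the tail of the boundary sum cancels the middle `α b` sum
  rw [show (∑ t ∈ Finset.range s,
        (-1 : ℤ) ^ (n + 1 + t + 1) •
          elemC k A (n + s + 1) (a₀ * u) fun i =>
            if i < n + 1 + t then if i < n + 1 then h i else f (n + (i - (n + 1)))
            else
              if i = n + 1 + t then
                (if n + 1 + t < n + 1 then h (n + 1 + t) else f (n + (n + 1 + t - (n + 1)))) *
                  if n + 1 + t + 1 < n + 1 then h (n + 1 + t + 1)
                  else f (n + (n + 1 + t + 1 - (n + 1)))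
              else if i + 1 < n + 1 then h (i + 1) else f (n + (i + 1 - (n + 1))))
      = -∑ t ∈ Finset.range s,
        (-1 : ℤ) ^ (n + t + 1) •
          elemC k A (n + s + 1) (a₀ * u) fun i =>
            if i < n + 1 then h i
            else
              if i - (n + 1) < t then f (n + (i - (n + 1)))
              else if i - (n + 1) = t then f (n + t) * f (n + t + 1) else f (n + (i - (n + 1)) + 1)
      from by
        rw [← Finset.sum_neg_distrib]
        refine Finset.sum_congr rfl fun t ht => ?_
        rw [show ((-1 : ℤ) ^ (n + 1 + t + 1)) = -(-1 : ℤ) ^ (n + t + 1) from by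
          rw [show n + 1 + t + 1 = (n + t + 1) + 1 from by omega, pow_succ]; ring]
        rw [neg_smul, neg_inj]
        refine congrArg (fun y => ((-1 : ℤ) ^ (n + t + 1)) • y) ?_
        apply elemC_congr
        intro i hi
        split_ifs <;>
          first
            | rfl
            | omega
            | (congr 1 <;> omega)
            | (congr 1 <;> first | omega | (congr 1 <;> omega))]
  -- (2) the last boundary term cancels the last `α b` term
  rw [show ((-1 : ℤ) ^ (n + s + 1 + 1) •
        elemC k A (n + s + 1)
          (Unitization.inr (if n + s + 1 < n + 1 then h (n + s + 1)
              else f (n + (n + s + 1 - (n + 1)))) * (a₀ * u))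
          fun i => if i < n + 1 then h i else f (n + (i - (n + 1))))
      = -((-1 : ℤ) ^ (n + s + 1) •
        elemC k A (n + s + 1) (Unitization.inr (f (n + s)) * a₀ * u)
          fun i => if i < n + 1 then h i else f (n + (i - (n + 1))))
      from by
        rw [pow_succ, mul_neg_one, neg_smul, neg_inj,
          show (Unitization.inr (if n + s + 1 < n + 1 then h (n + s + 1)
                else f (n + (n + s + 1 - (n + 1)))) * (a₀ * u) : Unitization k A)
              = Unitization.inr (f (n + s)) * a₀ * u from by
            rw [if_neg (by omega), show n + (n + s + 1 - (n + 1)) = n + s from by omega,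
              mul_assoc]]]
  -- (3) the first boundary term equals the third term on the right
  rw [show (elemC k A (n + s + 1)
        (a₀ * u * Unitization.inr (if 0 < n + 1 then h 0 else f (n + (0 - (n + 1))))) fun i =>
          if i + 1 < n + 1 then h (i + 1) else f (n + (i + 1 - (n + 1))))
      = ((-1 : ℤ) ^ (n + 1) * (-1 : ℤ) ^ (n + 1)) •
        elemC k A (n + s + 1) (a₀ * (u * Unitization.inr (h 0))) fun i =>
          if i < n + 1 then if i = n then f n else h (i + 1) else f (n + 1 + (i - (n + 1)))
      from by
        rw [show ((-1 : ℤ) ^ (n + 1) * (-1 : ℤ) ^ (n + 1)) = 1 from by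
            rw [← pow_add]; exact Even.neg_one_pow ⟨n + 1, by ring⟩,
          one_smul, if_pos (Nat.succ_pos n), mul_assoc]
        apply elemC_congr
        intro i hi
        split_ifs <;>
          first
            | rfl
            | omega
            | (congr 1 <;> omega)
            | (congr 1 <;> first | omega | (congr 1 <;> omega))]
  -- (4) the `j = n` boundary term equals the first term on the right
  rw [show ((-1 : ℤ) ^ (n + 1) •
        elemC k A (n + s + 1) (a₀ * u) fun i =>
          if i < n then if i < n + 1 then h i else f (n + (i - (n + 1)))
          else
            if i = n then
              (if n < n + 1 then h n else f (n + (n - (n + 1)))) *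
                if n + 1 < n + 1 then h (n + 1) else f (n + (n + 1 - (n + 1)))
            else if i + 1 < n + 1 then h (i + 1) else f (n + (i + 1 - (n + 1))))
      = (-1 : ℤ) ^ (n + 1) •
        elemC k A (n + s + 1) (a₀ * u) fun i =>
          if i < n + 1 then if i = n then h n * f n else h i else f (n + 1 + (i - (n + 1)))
      from by
        rw [show (elemC k A (n + s + 1) (a₀ * u) fun i =>
              if i < n then if i < n + 1 then h i else f (n + (i - (n + 1)))
              else
                if i = n then
                  (if n < n + 1 then h n else f (n + (n - (n + 1)))) *
                    if n + 1 < n + 1 then h (n + 1) else f (n + (n + 1 - (n + 1)))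
                else if i + 1 < n + 1 then h (i + 1) else f (n + (i + 1 - (n + 1))))
            = elemC k A (n + s + 1) (a₀ * u) fun i =>
              if i < n + 1 then if i = n then h n * f n else h i else f (n + 1 + (i - (n + 1)))
            from elemC_congr _ fun i hi => by
              split_ifs <;>
                first
                  | rfl
                  | omega
                  | (congr 1 <;> omega)
                  | (congr 1 <;> first | omega | (congr 1 <;> omega))]]
  -- (5) the `j < n` boundary sum equals the middle sum on the right
  rw [show (∑ j ∈ Finset.range n,
        (-1 : ℤ) ^ (j + 1) •
          elemC k A (n + s + 1) (a₀ * u) fun i =>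
            if i < j then if i < n + 1 then h i else f (n + (i - (n + 1)))
            else
              if i = j then
                (if j < n + 1 then h j else f (n + (j - (n + 1)))) *
                  if j + 1 < n + 1 then h (j + 1) else f (n + (j + 1 - (n + 1)))
              else if i + 1 < n + 1 then h (i + 1) else f (n + (i + 1 - (n + 1))))
      = ∑ j ∈ Finset.range n,
        ((-1 : ℤ) ^ (n + 1) * (-1 : ℤ) ^ (n - j)) •
          elemC k A (n + s + 1) (a₀ * u) fun i =>
            if i < n + 1 then
              if i < j then h i else if i = j then h j * h (j + 1) else if i = n then f n
              else h (i + 1)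
            else f (n + 1 + (i - (n + 1)))
      from Finset.sum_congr rfl fun j hj => by
        have hj' := Finset.mem_range.mp hj
        rw [show ((-1 : ℤ) ^ (n + 1) * (-1 : ℤ) ^ (n - j)) = (-1 : ℤ) ^ (j + 1) from by
          rw [← pow_add, show n + 1 + (n - j) = (j + 1) + 2 * (n - j) from by omega,
            pow_add, pow_mul, neg_one_sq, one_pow, mul_one]]
        rw [show (elemC k A (n + s + 1) (a₀ * u) fun i =>
              if i < j then if i < n + 1 then h i else f (n + (i - (n + 1)))
              else
                if i = j then
                  (if j < n + 1 then h j else f (n + (j - (n + 1)))) *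
                    if j + 1 < n + 1 then h (j + 1) else f (n + (j + 1 - (n + 1)))
                else if i + 1 < n + 1 then h (i + 1) else f (n + (i + 1 - (n + 1))))
            = elemC k A (n + s + 1) (a₀ * u) fun i =>
              if i < n + 1 then
                if i < j then h i else if i = j then h j * h (j + 1) else if i = n then f n
                else h (i + 1)
              else f (n + 1 + (i - (n + 1)))
            from elemC_congr _ fun i hi => by
              split_ifs <;>
                first
                  | rfl
                  | omega
                  | (congr 1 <;> omega)
                  | (congr 1 <;> first | omega | (congr 1 <;> omega))]]
  abel

end AuxLemmas

set_option maxHeartbeats 1000000 in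
set_option synthInstance.maxHeartbeats 200000 in
/-- Let `A` be an algebra, `Ω^n A ≅ A₊ ⊗ A^{⊗n}` the abstract `n`-forms, and
`φ : A^{⊗n} → Ω^{n+1}A` a Hochschild `n`-cochain with `δφ = d^{⊗(n+1)}` (the universal
`(n+1)`-cocycle).  Define `α : Ω^k A → Ω^{k+1} A` by
`α(a₀ da₁ ⋯ da_k) = a₀ φ(a₁,…,a_n) da_{n+1} ⋯ da_k`.  Then `bα + αb = 1` on
`Ω^k A ≅ C_k(A)` for all `k ≥ n+1`.  (The operators `b`, the right `A`-action on
`Ω^{n+1}A`, the tensor-appending maps and `α` are hypothesized as linear maps, uniquely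
determined by their stated values on elementary tensors.) -/
theorem stmt19 {k A : Type*} [CommRing k] [Ring A] [Algebra k A] (n : ℕ)
    -- the Hochschild boundary `b`
    (bop : ∀ m : ℕ, CycChain k A (m + 1) →ₗ[k] CycChain k A m)
    (hbop : ∀ (m : ℕ) (a₀ : Unitization k A) (f : ℕ → A),
      bop m (elemC k A (m + 1) a₀ f) = bElemF k A m a₀ f)
    -- the right `A`-module structure of the bimodule `Ω^{n+1}A`
    (rA : A → CycChain k A (n + 1) →ₗ[k] CycChain k A (n + 1))
    (hrA : ∀ (b : A) (a₀ : Unitization k A) (f : ℕ → A),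
      rA b (elemC k A (n + 1) a₀ f) = rElemF k A n a₀ f b)
    -- appending differentials: `ω ↦ ω d(g 0) ⋯ d(g (r-1))`
    (app : ∀ m r : ℕ, (ℕ → A) → (CycChain k A m →ₗ[k] CycChain k A (m + r)))
    (happ : ∀ (m r : ℕ) (g : ℕ → A) (a₀ : Unitization k A) (f : ℕ → A),
      app m r g (elemC k A m a₀ f)
        = elemC k A (m + r) a₀ (fun i => if i < m then f i else g (i - m)))
    -- the cochain `φ` with `δφ` equal to the universal cocycle `d^{⊗(n+1)}`
    (φ : MultilinearMap k (fun _ : Fin n => A) (CycChain k A (n + 1)))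
    (hφ : ∀ f : ℕ → A,
      leftA k A (n + 1) (Unitization.inr (f 0))
          (PiTensorProduct.lift φ (PiTensorProduct.tprod k (fun i : Fin n => f ((i : ℕ) + 1))))
        + ∑ j ∈ Finset.range n, ((-1 : ℤ) ^ (j + 1)) •
            PiTensorProduct.lift φ (PiTensorProduct.tprod k
              (fun i : Fin n => if (i : ℕ) < j then f (i : ℕ)
                else if (i : ℕ) = j then f j * f (j + 1) else f ((i : ℕ) + 1)))
        + ((-1 : ℤ) ^ (n + 1)) •
            rA (f n) (PiTensorProduct.lift φ (PiTensorProduct.tprod k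
              (fun i : Fin n => f (i : ℕ))))
        = elemC k A (n + 1) 1 f)
    -- the operator `α`
    (α : ∀ s : ℕ, CycChain k A (n + s) →ₗ[k] CycChain k A (n + s + 1))
    (hα : ∀ (s : ℕ) (a₀ : Unitization k A) (f : ℕ → A),
      α s (elemC k A (n + s) a₀ f)
        = castDeg k A (by omega : (n + 1) + s = n + s + 1)
            (leftA k A ((n + 1) + s) a₀
              (app (n + 1) s (fun i => f (n + i))
                (PiTensorProduct.lift φ (PiTensorProduct.tprod k
                  (fun i : Fin n => f (i : ℕ))))))) :
    ∀ (s : ℕ) (x : CycChain k A (n + s + 1)),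
      bop (n + s + 1) (α (s + 1) x) + α s (bop (n + s) x) = x := by
  intro s
  suffices h : (((bop (n + s + 1)).comp (α (s + 1)) :
        CycChain k A (n + s + 1) →ₗ[k] CycChain k A (n + s + 1))
      + (α s).comp (bop (n + s))) = LinearMap.id by
    intro x
    have := LinearMap.congr_fun h x
    simpa only [LinearMap.add_apply, LinearMap.comp_apply, LinearMap.id_apply] using this
  apply linearMap_ext_elemC
  intro a₀ f
  simp only [LinearMap.add_apply, LinearMap.comp_apply, LinearMap.id_apply]
  show bop (n + s + 1) ((α (s + 1)) (elemC k A (n + (s + 1)) a₀ f))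
      + α s (bop (n + s) (elemC k A (n + s + 1) a₀ f)) = elemC k A (n + s + 1) a₀ f
  rw [hα (s + 1) a₀ f, hbop (n + s) a₀ f]
  unfold bElemF
  rw [map_add, map_add, map_zsmul, map_sum]
  simp only [map_zsmul, hα]
  rw [sum_range_split n s]
  -- normalize the `j < n` part of the boundary sum
  rw [show (∑ j ∈ Finset.range n,
        (-1 : ℤ) ^ (j + 1) •
          (castDeg k A (by omega : n + 1 + s = n + s + 1))
            ((leftA k A (n + 1 + s) a₀)
              ((app (n + 1) s fun i1 =>
                  if n + i1 < j then f (n + i1) else if n + i1 = j then f j * f (j + 1)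
                  else f (n + i1 + 1))
                ((PiTensorProduct.lift φ)
                  ((PiTensorProduct.tprod k) fun i1 : Fin n =>
                    if ↑i1 < j then f ↑i1 else if ↑i1 = j then f j * f (j + 1) else f (↑i1 + 1))))))
      = ∑ j ∈ Finset.range n,
        (-1 : ℤ) ^ (j + 1) •
          (castDeg k A (by omega : n + 1 + s = n + s + 1))
            ((leftA k A (n + 1 + s) a₀)
              ((app (n + 1) s fun i1 => f (n + 1 + i1))
                ((PiTensorProduct.lift φ)
                  ((PiTensorProduct.tprod k) fun i1 : Fin n =>
                    if ↑i1 < j then f ↑i1 else if ↑i1 = j then f j * f (j + 1) else f (↑i1 + 1)))))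
      from Finset.sum_congr rfl fun j hj => by
        have hj' : j < n := Finset.mem_range.mp hj
        rw [show (fun i1 => if n + i1 < j then f (n + i1) else if n + i1 = j then f j * f (j + 1)
              else f (n + i1 + 1)) = fun i1 => f (n + 1 + i1) from
          funext fun i1 => by
            rw [if_neg (by omega), if_neg (by omega)]; exact congrArg f (by omega)]]
  -- normalize the `j = n + t` part of the boundary sum
  rw [show (∑ t ∈ Finset.range s,
        (-1 : ℤ) ^ (n + t + 1) •
          (castDeg k A (by omega : n + 1 + s = n + s + 1))
            ((leftA k A (n + 1 + s) a₀)
              ((app (n + 1) s fun i =>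
                  if n + i < n + t then f (n + i)
                  else if n + i = n + t then f (n + t) * f (n + t + 1) else f (n + i + 1))
                ((PiTensorProduct.lift φ)
                  ((PiTensorProduct.tprod k) fun i : Fin n =>
                    if ↑i < n + t then f ↑i
                    else if ↑i = n + t then f (n + t) * f (n + t + 1) else f (↑i + 1))))))
      = ∑ t ∈ Finset.range s,
        (-1 : ℤ) ^ (n + t + 1) •
          (castDeg k A (by omega : n + 1 + s = n + s + 1))
            ((leftA k A (n + 1 + s) a₀)
              ((app (n + 1) s fun i =>
                  if i < t then f (n + i) else if i = t then f (n + t) * f (n + t + 1)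
                  else f (n + i + 1))
                ((PiTensorProduct.lift φ)
                  ((PiTensorProduct.tprod k) fun i : Fin n => f ↑i))))
      from Finset.sum_congr rfl fun t ht => by
        rw [show (fun i => if n + i < n + t then f (n + i)
              else if n + i = n + t then f (n + t) * f (n + t + 1) else f (n + i + 1))
            = fun i => if i < t then f (n + i) else if i = t then f (n + t) * f (n + t + 1)
              else f (n + i + 1) from
          funext fun i => by split_ifs <;> first | rfl | omega | exact congrArg f (by omega)]
        rw [show (fun i : Fin n => if ↑i < n + t then f ↑i
              else if ↑i = n + t then f (n + t) * f (n + t + 1) else f (↑i + 1))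
            = fun i : Fin n => f ↑i from
          funext fun i => by have := i.isLt; rw [if_pos (by omega)]]]
  -- rewrite the first `αb` term through `Lm_leftA`
  rw [show (castDeg k A (by omega : n + 1 + s = n + s + 1))
        ((leftA k A (n + 1 + s) (a₀ * Unitization.inr (f 0)))
          ((app (n + 1) s fun i => f (n + i + 1))
            ((PiTensorProduct.lift φ) ((PiTensorProduct.tprod k) fun i : Fin n => f (↑i + 1)))))
      = (castDeg k A (by omega : n + 1 + s = n + s + 1))
        ((leftA k A (n + 1 + s) a₀)
          ((app (n + 1) s fun i => f (n + 1 + i))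
            ((leftA k A (n + 1) (Unitization.inr (f 0)))
              ((PiTensorProduct.lift φ) ((PiTensorProduct.tprod k) fun i : Fin n => f (↑i + 1))))))
      from by
        have h2 := LinearMap.congr_fun (Lm_leftA n app happ s a₀ (Unitization.inr (f 0))
            (fun i => f (n + 1 + i)))
          ((PiTensorProduct.lift φ) ((PiTensorProduct.tprod k) fun i : Fin n => f (↑i + 1)))
        simp only [Lm, LinearMap.comp_apply, LinearEquiv.coe_coe] at h2
        rw [show (fun i => f (n + i + 1)) = fun i => f (n + 1 + i) from
          funext fun i => congrArg f (by omega)]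
        exact h2]
  -- convert the `bα` term to the shape used in `lemE` (defeq, different degree parses)
  rw [show (bop (n + s + 1))
        ((castDeg k A (by omega : n + 1 + (s + 1) = n + (s + 1) + 1))
          ((leftA k A (n + 1 + (s + 1)) a₀)
            ((app (n + 1) (s + 1) fun i => f (n + i))
              ((PiTensorProduct.lift φ) ((PiTensorProduct.tprod k) fun i : Fin n => f ↑i)))))
      = (bop (n + s + 1))
        ((castDeg k A (by omega : n + 1 + (s + 1) = n + s + 1 + 1))
          ((leftA k A (n + 1 + (s + 1)) a₀)
            ((app (n + 1) (s + 1) fun i => f (n + i))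
              ((PiTensorProduct.lift φ) ((PiTensorProduct.tprod k) fun i : Fin n => f ↑i)))))
      from rfl]
  -- apply the key homotopy identity (lemE)
  have lemEap := LinearMap.congr_fun (lemE n bop hbop rA hrA app happ s a₀ f)
      ((PiTensorProduct.lift φ) ((PiTensorProduct.tprod k) fun i : Fin n => f ↑i))
  simp only [Lm, LinearMap.add_apply, LinearMap.comp_apply, LinearMap.coe_comp,
    Function.comp_apply, LinearMap.sum_apply, LinearMap.smul_apply, LinearEquiv.coe_coe]
    at lemEap
  have hG1 := eq_sub_of_add_eq (eq_sub_of_add_eq lemEap)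
  rw [hG1]
  -- the surviving terms give back `x` via `hφ`
  have step := congrArg (fun y => (castDeg k A (by omega : n + 1 + s = n + s + 1))
      ((leftA k A (n + 1 + s) a₀) ((app (n + 1) s fun i => f (n + 1 + i)) y))) (hφ f)
  simp only [map_add, map_zsmul, map_sum] at step
  rw [happ, leftA_elemC, castDeg_elemC, mul_one] at step
  rw [show elemC k A (n + s + 1) a₀
        (fun i => if i < n + 1 then f i else f (n + 1 + (i - (n + 1)))) = elemC k A (n + s + 1) a₀ f
      from elemC_congr a₀ fun i hi => by
        by_cases h : i < n + 1
        · rw [if_pos h]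
        · rw [if_neg h]; exact congrArg f (by omega)] at step
  rw [← step]
  abel
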